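/- Let L̃ be a 2n×2n real block lower triangular matrix partitioned into n×n blocks L̃ = [[L̃11, 0], [L̃21, L̃22]], and define F = L̃ᵀJL̃ − J, partitioned conformally as F = [[F11, F12], [F21, F22]]. Then the loss of symplecticity Δ(L̃) = ‖F‖₂ satisfies max{‖F11‖₂, ‖F12‖₂} ≤ Δ(L̃) ≤ 2·max{‖F11‖₂, ‖F12‖₂}. -/

import Mathlib

open Matrix
open scoped Matrix.Norms.L2Operator

section Helpers

variable {m m' p p' : Type*} [Fintype m] [Fintype m'] [Fintype p] [Fintype p']
  [DecidableEq m] [DecidableEq m'] [DecidableEq p] [DecidableEq p']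

set_option linter.unusedSectionVars false

lemma euclid_sq (x : EuclideanSpace ℝ (m ⊕ m')) :
    ‖x‖ ^ 2 = ‖((WithLp.equiv 2 _).symm (fun i => x (Sum.inl i)) : EuclideanSpace ℝ m)‖ ^ 2
      + ‖((WithLp.equiv 2 _).symm (fun i => x (Sum.inr i)) : EuclideanSpace ℝ m')‖ ^ 2 := by
  simp only [EuclideanSpace.norm_eq]
  rw [Real.sq_sqrt (by positivity), Real.sq_sqrt (by positivity), Real.sq_sqrt (by positivity),
    Fintype.sum_sum_type]
  rfl

lemma opnorm_le {A : Matrix m p ℝ} {c : ℝ} (hc : 0 ≤ c)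
    (h : ∀ x : EuclideanSpace ℝ p,
      ‖((WithLp.equiv 2 _).symm (A *ᵥ (WithLp.equiv 2 _) x) : EuclideanSpace ℝ m)‖ ≤ c * ‖x‖) :
    ‖A‖ ≤ c := by
  rw [Matrix.l2_opNorm_def]
  exact ContinuousLinearMap.opNorm_le_bound _ hc h

lemma mulvec_le (A : Matrix m p ℝ) (u : p → ℝ) :
    ‖((WithLp.equiv 2 _).symm (A *ᵥ u) : EuclideanSpace ℝ m)‖
      ≤ ‖A‖ * ‖((WithLp.equiv 2 _).symm u : EuclideanSpace ℝ p)‖ := by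
  simpa using Matrix.l2_opNorm_mulVec A ((WithLp.equiv 2 _).symm u)

lemma norm_elim_sq (u : m → ℝ) (v : m' → ℝ) :
    ‖((WithLp.equiv 2 _).symm (Sum.elim u v) : EuclideanSpace ℝ (m ⊕ m'))‖ ^ 2
      = ‖((WithLp.equiv 2 _).symm u : EuclideanSpace ℝ m)‖ ^ 2
        + ‖((WithLp.equiv 2 _).symm v : EuclideanSpace ℝ m')‖ ^ 2 := by
  simpa using euclid_sq ((WithLp.equiv 2 _).symm (Sum.elim u v) : EuclideanSpace ℝ (m ⊕ m'))

lemma norm_block_le_fromBlocks₁₁ (A : Matrix m p ℝ) (B : Matrix m p' ℝ)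
    (C : Matrix m' p ℝ) (D : Matrix m' p' ℝ) :
    ‖A‖ ≤ ‖fromBlocks A B C D‖ := by
  apply opnorm_le (norm_nonneg _)
  intro x
  set u : p → ℝ := (WithLp.equiv 2 _) x with hu
  have h1 : fromBlocks A B C D *ᵥ Sum.elim u 0 = Sum.elim (A *ᵥ u) (C *ᵥ u) := by
    rw [Matrix.fromBlocks_mulVec]; simp
  have h2 : ‖((WithLp.equiv 2 _).symm (A *ᵥ u) : EuclideanSpace ℝ m)‖
      ≤ ‖((WithLp.equiv 2 _).symm (fromBlocks A B C D *ᵥ Sum.elim u 0) :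
          EuclideanSpace ℝ (m ⊕ m'))‖ := by
    apply le_of_pow_le_pow_left₀ two_ne_zero (norm_nonneg _)
    rw [h1, norm_elim_sq]
    nlinarith [norm_nonneg ((WithLp.equiv 2 _).symm (C *ᵥ u) : EuclideanSpace ℝ m')]
  have h3 := mulvec_le (fromBlocks A B C D) (Sum.elim u 0)
  have h4 : ‖((WithLp.equiv 2 _).symm (Sum.elim u (0 : p' → ℝ)) :
      EuclideanSpace ℝ (p ⊕ p'))‖ = ‖x‖ := by
    apply le_antisymm <;>
      apply le_of_pow_le_pow_left₀ two_ne_zero (norm_nonneg _) <;>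
      rw [norm_elim_sq] <;> simp [hu]
  calc _ ≤ _ := h2
    _ ≤ _ := h3
    _ = ‖fromBlocks A B C D‖ * ‖x‖ := by rw [h4]

lemma norm_block_le_fromBlocks₁₂ (A : Matrix m p ℝ) (B : Matrix m p' ℝ)
    (C : Matrix m' p ℝ) (D : Matrix m' p' ℝ) :
    ‖B‖ ≤ ‖fromBlocks A B C D‖ := by
  apply opnorm_le (norm_nonneg _)
  intro x
  set u : p' → ℝ := (WithLp.equiv 2 _) x with hu
  have h1 : fromBlocks A B C D *ᵥ Sum.elim 0 u = Sum.elim (B *ᵥ u) (D *ᵥ u) := by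
    rw [Matrix.fromBlocks_mulVec]; simp
  have h2 : ‖((WithLp.equiv 2 _).symm (B *ᵥ u) : EuclideanSpace ℝ m)‖
      ≤ ‖((WithLp.equiv 2 _).symm (fromBlocks A B C D *ᵥ Sum.elim 0 u) :
          EuclideanSpace ℝ (m ⊕ m'))‖ := by
    apply le_of_pow_le_pow_left₀ two_ne_zero (norm_nonneg _)
    rw [h1, norm_elim_sq]
    nlinarith [norm_nonneg ((WithLp.equiv 2 _).symm (D *ᵥ u) : EuclideanSpace ℝ m')]
  have h3 := mulvec_le (fromBlocks A B C D) (Sum.elim 0 u)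
  have h4 : ‖((WithLp.equiv 2 _).symm (Sum.elim (0 : p → ℝ) u) :
      EuclideanSpace ℝ (p ⊕ p'))‖ = ‖x‖ := by
    apply le_antisymm <;>
      apply le_of_pow_le_pow_left₀ two_ne_zero (norm_nonneg _) <;>
      rw [norm_elim_sq] <;> simp [hu]
  calc _ ≤ _ := h2
    _ ≤ _ := h3
    _ = ‖fromBlocks A B C D‖ * ‖x‖ := by rw [h4]

lemma norm_fromBlocks_diag_le (A : Matrix m p ℝ) :
    ‖(fromBlocks A 0 0 0 : Matrix (m ⊕ m') (p ⊕ p') ℝ)‖ ≤ ‖A‖ := by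
  apply opnorm_le (norm_nonneg _)
  intro x
  set y : (p ⊕ p') → ℝ := (WithLp.equiv 2 _) x with hy
  have h1 : (fromBlocks A 0 0 0 : Matrix (m ⊕ m') (p ⊕ p') ℝ) *ᵥ y
      = Sum.elim (A *ᵥ (y ∘ Sum.inl)) 0 := by
    have : y = Sum.elim (y ∘ Sum.inl) (y ∘ Sum.inr) := by ext (i | i) <;> rfl
    rw [this, Matrix.fromBlocks_mulVec]; simp
  apply le_of_pow_le_pow_left₀ two_ne_zero (by positivity)
  rw [h1, norm_elim_sq]
  have h2 := mulvec_le A (y ∘ Sum.inl)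
  have h3 : ‖((WithLp.equiv 2 _).symm (y ∘ Sum.inl) : EuclideanSpace ℝ p)‖ ≤ ‖x‖ := by
    apply le_of_pow_le_pow_left₀ two_ne_zero (norm_nonneg _)
    have hxsq := euclid_sq x
    have h0 : (fun i => x (Sum.inl i)) = y ∘ Sum.inl := rfl
    rw [h0] at hxsq
    nlinarith [norm_nonneg ((WithLp.equiv 2 _).symm (fun i => x (Sum.inr i)) :
      EuclideanSpace ℝ p')]
  have hz : ((WithLp.equiv 2 (m' → ℝ)).symm (0 : m' → ℝ) : EuclideanSpace ℝ m') = 0 := rfl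
  rw [hz, norm_zero]
  have hsq1 : ‖((WithLp.equiv 2 _).symm (A *ᵥ (y ∘ Sum.inl)) : EuclideanSpace ℝ m)‖ ^ 2
      ≤ (‖A‖ * ‖((WithLp.equiv 2 _).symm (y ∘ Sum.inl) : EuclideanSpace ℝ p)‖) ^ 2 :=
    pow_le_pow_left₀ (norm_nonneg _) h2 2
  have hAnn := norm_nonneg A
  have hyp := norm_nonneg ((WithLp.equiv 2 _).symm (y ∘ Sum.inl) : EuclideanSpace ℝ p)
  have hxn := norm_nonneg x
  have hc2 : ‖((WithLp.equiv 2 _).symm (y ∘ Sum.inl) : EuclideanSpace ℝ p)‖ ^ 2 ≤ ‖x‖ ^ 2 :=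
    pow_le_pow_left₀ hyp h3 2
  nlinarith [mul_le_mul_of_nonneg_left hc2 (sq_nonneg ‖A‖)]

lemma norm_fromBlocks_offdiag_le (B : Matrix m p ℝ) :
    ‖(fromBlocks 0 B (-Bᵀ) 0 : Matrix (m ⊕ p) (m ⊕ p) ℝ)‖ ≤ ‖B‖ := by
  apply opnorm_le (norm_nonneg _)
  intro x
  set y : (m ⊕ p) → ℝ := (WithLp.equiv 2 _) x with hy
  have h1 : (fromBlocks 0 B (-Bᵀ) 0 : Matrix (m ⊕ p) (m ⊕ p) ℝ) *ᵥ y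
      = Sum.elim (B *ᵥ (y ∘ Sum.inr)) (-(Bᵀ *ᵥ (y ∘ Sum.inl))) := by
    have : y = Sum.elim (y ∘ Sum.inl) (y ∘ Sum.inr) := by ext (i | i) <;> rfl
    rw [this, Matrix.fromBlocks_mulVec]
    simp [Matrix.neg_mulVec]
  apply le_of_pow_le_pow_left₀ two_ne_zero (by positivity)
  rw [h1, norm_elim_sq]
  have hBt : ‖Bᵀ‖ = ‖B‖ := by
    rw [← Matrix.conjTranspose_eq_transpose_of_trivial]
    exact Matrix.l2_opNorm_conjTranspose B
  have h2 := mulvec_le B (y ∘ Sum.inr)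
  have h3 := mulvec_le Bᵀ (y ∘ Sum.inl)
  rw [hBt] at h3
  have hx := euclid_sq x
  have h0l : (fun i => x (Sum.inl i)) = y ∘ Sum.inl := rfl
  have h0r : (fun i => x (Sum.inr i)) = y ∘ Sum.inr := rfl
  rw [h0l, h0r] at hx
  have hneg : ‖((WithLp.equiv 2 _).symm (-(Bᵀ *ᵥ (y ∘ Sum.inl))) : EuclideanSpace ℝ p)‖
      = ‖((WithLp.equiv 2 _).symm (Bᵀ *ᵥ (y ∘ Sum.inl)) : EuclideanSpace ℝ p)‖ := by
    have : ((WithLp.equiv 2 _).symm (-(Bᵀ *ᵥ (y ∘ Sum.inl))) : EuclideanSpace ℝ p)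
        = -((WithLp.equiv 2 _).symm (Bᵀ *ᵥ (y ∘ Sum.inl)) : EuclideanSpace ℝ p) := rfl
    rw [this, norm_neg]
  rw [hneg]
  have hsq1 : ‖((WithLp.equiv 2 _).symm (B *ᵥ (y ∘ Sum.inr)) : EuclideanSpace ℝ m)‖ ^ 2
      ≤ (‖B‖ * ‖((WithLp.equiv 2 _).symm (y ∘ Sum.inr) : EuclideanSpace ℝ p)‖) ^ 2 :=
    pow_le_pow_left₀ (norm_nonneg _) h2 2
  have hsq2 : ‖((WithLp.equiv 2 _).symm (Bᵀ *ᵥ (y ∘ Sum.inl)) : EuclideanSpace ℝ p)‖ ^ 2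
      ≤ (‖B‖ * ‖((WithLp.equiv 2 _).symm (y ∘ Sum.inl) : EuclideanSpace ℝ m)‖) ^ 2 :=
    pow_le_pow_left₀ (norm_nonneg _) h3 2
  have hB := norm_nonneg B
  have hxB : ‖B‖ ^ 2 * ‖x‖ ^ 2
      = ‖B‖ ^ 2 * (‖((WithLp.equiv 2 _).symm (y ∘ Sum.inl) : EuclideanSpace ℝ m)‖ ^ 2
        + ‖((WithLp.equiv 2 _).symm (y ∘ Sum.inr) : EuclideanSpace ℝ p)‖ ^ 2) := by rw [hx]
  nlinarith

lemma fromBlocks_sub' {l o : Type*} (A A' : Matrix p l ℝ) (B B' : Matrix p o ℝ)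
    (C C' : Matrix p' l ℝ) (D D' : Matrix p' o ℝ) :
    fromBlocks A B C D - fromBlocks A' B' C' D'
      = fromBlocks (A - A') (B - B') (C - C') (D - D') := by
  ext (i | i) (j | j) <;> simp [fromBlocks]

end Helpers

/-- The standard symplectic matrix `J = [[0, I], [-I, 0]]`. -/
noncomputable def symplJ (n : ℕ) : Matrix (Fin n ⊕ Fin n) (Fin n ⊕ Fin n) ℝ :=
  Matrix.fromBlocks 0 1 (-1) 0

/-- For a block lower triangular `L̃ = [[L̃11, 0], [L̃21, L̃22]]` and
`F = L̃ᵀ J L̃ − J` partitioned conformally, the loss of symplecticity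
`Δ(L̃) = ‖F‖₂` satisfies
`max{‖F11‖₂, ‖F12‖₂} ≤ Δ(L̃) ≤ 2 max{‖F11‖₂, ‖F12‖₂}`. -/
theorem loss_of_symplecticity_block_bounds (n : ℕ)
    (L11 L21 L22 : Matrix (Fin n) (Fin n) ℝ)
    (L : Matrix (Fin n ⊕ Fin n) (Fin n ⊕ Fin n) ℝ)
    (hL : L = Matrix.fromBlocks L11 0 L21 L22)
    (F : Matrix (Fin n ⊕ Fin n) (Fin n ⊕ Fin n) ℝ)
    (hF : F = Lᵀ * symplJ n * L - symplJ n) :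
    max ‖F.toBlocks₁₁‖ ‖F.toBlocks₁₂‖ ≤ ‖F‖ ∧
      ‖F‖ ≤ 2 * max ‖F.toBlocks₁₁‖ ‖F.toBlocks₁₂‖ := by
  set F11 := L11ᵀ * L21 - L21ᵀ * L11 with hF11
  set F12 := L11ᵀ * L22 - 1 with hF12
  have hFb : F = fromBlocks F11 F12 (-F12ᵀ) 0 := by
    subst hF hL
    rw [symplJ, Matrix.fromBlocks_transpose, Matrix.fromBlocks_multiply,
      Matrix.fromBlocks_multiply, fromBlocks_sub']
    rw [Matrix.fromBlocks_inj]
    refine ⟨?_, ?_, ?_, ?_⟩ <;>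
      simp [hF11, hF12, Matrix.transpose_sub, Matrix.transpose_mul] <;> abel
  have h11 : F.toBlocks₁₁ = F11 := by rw [hFb]; simp
  have h12 : F.toBlocks₁₂ = F12 := by rw [hFb]; simp
  rw [h11, h12]
  constructor
  · rw [hFb]
    exact max_le (norm_block_le_fromBlocks₁₁ _ _ _ _) (norm_block_le_fromBlocks₁₂ _ _ _ _)
  · have hsplit : F = fromBlocks F11 0 0 0 + fromBlocks 0 F12 (-F12ᵀ) 0 := by
      rw [hFb, Matrix.fromBlocks_add]; simp
    have htri : ‖F‖ ≤ ‖(fromBlocks F11 0 0 0 : Matrix (Fin n ⊕ Fin n) (Fin n ⊕ Fin n) ℝ)‖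
        + ‖(fromBlocks 0 F12 (-F12ᵀ) 0 : Matrix (Fin n ⊕ Fin n) (Fin n ⊕ Fin n) ℝ)‖ := by
      rw [hsplit]; exact norm_add_le _ _
    have hA := norm_fromBlocks_diag_le (m' := Fin n) (p' := Fin n) F11
    have hB := norm_fromBlocks_offdiag_le F12
    have m1 := le_max_left ‖F11‖ ‖F12‖
    have m2 := le_max_right ‖F11‖ ‖F12‖
    linarith
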